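/- Hodge decomposition (paper Lemma 'Hodge decomposition'): Let V be a finite-dimensional vector space over a field of characteristic zero, ω a nondegenerate alternating bilinear form on V, and Q : V → V a linear map with Q∘Q = 0 satisfying the compatibility ω(Qx, y) + ω(x, Qy) = 0 for all x, y ∈ V. Then there exist subspaces H and C of V such that, with B := range Q: V is the internal direct sum H ⊕ B ⊕ C; ker Q = H ⊕ B; the restriction of ω to H is nondegenerate; the restriction of ω to B ⊕ C is nondegenerate; and B and C are isotropic, i.e. ω(b, b') = 0 for all b, b' ∈ B and ω(c, c') = 0 for all c, c' ∈ C (so B and C are Lagrangian subspaces of B ⊕ C). -/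

import Mathlib

open Module Submodule

lemma hodge_isInternal_three {K V : Type*} [Field K] [AddCommGroup V] [Module K V]
    (A B C : Submodule K V)
    (h1 : Disjoint A (B ⊔ C)) (h2 : Disjoint B (A ⊔ C)) (h3 : Disjoint C (A ⊔ B))
    (hsup : A ⊔ B ⊔ C = ⊤) :
    DirectSum.IsInternal (![A, B, C] : Fin 3 → Submodule K V) := by
  rw [DirectSum.isInternal_submodule_iff_iSupIndep_and_iSup_eq_top]
  constructor
  · intro i
    fin_cases i
    · refine Disjoint.mono_right ?_ h1
      apply iSup_le; intro j; apply iSup_le; intro hj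
      fin_cases j
      · exact absurd rfl hj
      · exact le_sup_left
      · exact le_sup_right
    · refine Disjoint.mono_right ?_ h2
      apply iSup_le; intro j; apply iSup_le; intro hj
      fin_cases j
      · exact le_sup_left
      · exact absurd rfl hj
      · exact le_sup_right
    · refine Disjoint.mono_right ?_ h3
      apply iSup_le; intro j; apply iSup_le; intro hj
      fin_cases j
      · exact le_sup_left
      · exact le_sup_right
      · exact absurd rfl hj
  · rw [← hsup, sup_assoc]
    apply le_antisymm
    · apply iSup_le; intro j
      fin_cases j
      · exact le_sup_left
      · exact le_trans le_sup_left le_sup_right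
      · exact le_trans le_sup_right le_sup_right
    · apply sup_le
      · exact le_iSup (![A,B,C] : Fin 3 → Submodule K V) 0
      · apply sup_le
        · exact le_iSup (![A,B,C] : Fin 3 → Submodule K V) 1
        · exact le_iSup (![A,B,C] : Fin 3 → Submodule K V) 2



/-- **Hodge decomposition.** Let `V` be a finite-dimensional vector space over
a field of characteristic zero, `ω` a nondegenerate alternating bilinear form
on `V`, and `Q : V → V` linear with `Q∘Q = 0` and
`ω(Qx,y) + ω(x,Qy) = 0`. Then there are subspaces `H` and `C` such that, with
`B := range Q`: `V = H ⊕ B ⊕ C` (internal direct sum), `ker Q = H ⊕ B`,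
`ω` restricted to `H` is nondegenerate, `ω` restricted to `B ⊕ C` is
nondegenerate, and `B` and `C` are isotropic. -/
theorem hodge_decomposition
    {K V : Type*} [Field K] [CharZero K]
    [AddCommGroup V] [Module K V] [FiniteDimensional K V]
    (ω : LinearMap.BilinForm K V) (halt : ω.IsAlt) (hnd : ω.Nondegenerate)
    (Q : V →ₗ[K] V) (hQ2 : Q ∘ₗ Q = 0)
    (hcompat : ∀ x y : V, ω (Q x) y + ω x (Q y) = 0) :
    ∃ H C : Submodule K V,
      -- V is the internal direct sum H ⊕ B ⊕ C, with B = range Q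
      DirectSum.IsInternal (![H, LinearMap.range Q, C] : Fin 3 → Submodule K V) ∧
      -- ker Q = H ⊕ B
      LinearMap.ker Q = H ⊔ LinearMap.range Q ∧
      -- ω restricted to H is nondegenerate
      (LinearMap.BilinForm.restrict ω H).Nondegenerate ∧
      -- ω restricted to B ⊕ C is nondegenerate
      (LinearMap.BilinForm.restrict ω (LinearMap.range Q ⊔ C)).Nondegenerate ∧
      -- B is isotropic
      (∀ b ∈ LinearMap.range Q, ∀ b' ∈ LinearMap.range Q, ω b b' = 0) ∧
      -- C is isotropic
      (∀ c ∈ C, ∀ c' ∈ C, ω c c' = 0) := by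
  classical
  have hrefl : ω.IsRefl := halt.isRefl
  set B := LinearMap.range Q with hBdef
  set Z := LinearMap.ker Q with hZdef
  have hQQ : ∀ x, Q (Q x) = 0 := fun x => by
    have := congrArg (fun f => f x) (congrArg DFunLike.coe hQ2); simpa using this
  have hskew : ∀ x y, ω (Q x) y = - ω x (Q y) := fun x y =>
    eq_neg_of_add_eq_zero_left (hcompat x y)
  have hBZ : B ≤ Z := by
    rintro _ ⟨x, rfl⟩
    exact LinearMap.mem_ker.2 (hQQ x)
  have hBiso : ∀ b ∈ B, ∀ b' ∈ B, ω b b' = 0 := by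
    rintro _ ⟨x, rfl⟩ _ ⟨y, rfl⟩
    rw [hskew, hQQ, map_zero, neg_zero]
  -- Z = orthogonal of B
  have hZorth : Z = ω.orthogonal B := by
    have hle : Z ≤ ω.orthogonal B := by
      intro z hz
      rintro _ ⟨x, rfl⟩
      show ω (Q x) z = 0
      rw [hskew, LinearMap.mem_ker.1 hz, map_zero, neg_zero]
    refine Submodule.eq_of_le_of_finrank_le hle ?_
    rw [LinearMap.BilinForm.finrank_orthogonal hnd]
    have h1 := LinearMap.finrank_range_add_finrank_ker Q
    rw [← hBdef, ← hZdef] at h1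
    have h2 : finrank K B ≤ finrank K V := Submodule.finrank_le B
    omega
  have hZorth' : ω.orthogonal Z = B := by
    rw [hZorth, LinearMap.BilinForm.orthogonal_orthogonal hnd hrefl]
  -- complement H of B inside Z
  obtain ⟨H', hH'⟩ := Submodule.exists_isCompl (B.comap Z.subtype)
  set H := H'.map Z.subtype with hHdef
  have hHZ : H ≤ Z := Submodule.map_subtype_le Z H'
  have hHBsup : B ⊔ H = Z := by
    have h := congrArg (Submodule.map Z.subtype) hH'.sup_eq_top
    rwa [Submodule.map_sup, Submodule.map_comap_subtype, inf_eq_right.mpr hBZ,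
      Submodule.map_top, Submodule.range_subtype] at h
  have hHBinf : ∀ x, x ∈ H → x ∈ B → x = 0 := by
    intro x hxH hxB
    obtain ⟨y, hyH', rfl⟩ := Submodule.mem_map.1 hxH
    have hy : y ∈ (B.comap Z.subtype) ⊓ H' := ⟨hxB, hyH'⟩
    rw [hH'.inf_eq_bot] at hy
    simp [(Submodule.mem_bot K).1 hy]
  -- ω restricted to H is nondegenerate
  have hHnd : (LinearMap.BilinForm.restrict ω H).Nondegenerate := by
    refine (LinearMap.IsRefl.nondegenerate_iff_separatingLeft (B := LinearMap.BilinForm.restrict ω H)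
      (fun x y hxy => hrefl _ _ hxy)).2 ?_
    rintro ⟨h, hh⟩ hall
    have hωZ : ∀ z ∈ Z, ω z h = 0 := by
      intro z hz
      rw [← hHBsup] at hz
      obtain ⟨b, hb, h', hh', rfl⟩ := Submodule.mem_sup.1 hz
      have h1 : ω b h = 0 := (hZorth ▸ hHZ hh) b hb
      have h2 : ω h h' = 0 := hall ⟨h', hh'⟩
      have h2' : ω h' h = 0 := hrefl _ _ h2
      rw [map_add, LinearMap.add_apply, h1, h2', add_zero]
    have hmem : h ∈ ω.orthogonal Z := fun n hn => hωZ n hn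
    rw [hZorth'] at hmem
    exact Subtype.ext (hHBinf h hh hmem)
  -- W := orthogonal of H
  set W := ω.orthogonal H with hWdef
  have hHW : IsCompl H W :=
    LinearMap.BilinForm.isCompl_orthogonal_of_restrict_nondegenerate hrefl hHnd
  have hBW : B ≤ W := by
    intro b hb h hh
    exact hrefl b h ((hZorth ▸ hHZ hh) b hb)
  have hWnd : (LinearMap.BilinForm.restrict ω W).Nondegenerate := by
    refine (LinearMap.IsRefl.nondegenerate_iff_separatingLeft (B := LinearMap.BilinForm.restrict ω W)
      (fun x y hxy => hrefl _ _ hxy)).2 ?_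
    rintro ⟨w, hw⟩ hall
    have : ∀ v : V, ω w v = 0 := by
      intro v
      have hv : v ∈ H ⊔ W := by rw [hHW.sup_eq_top]; exact Submodule.mem_top
      obtain ⟨h, hh, w', hw', rfl⟩ := Submodule.mem_sup.1 hv
      have h1 : ω w h = 0 := hrefl _ _ (hw h hh)
      have h2 : ω w w' = 0 := hall ⟨w', hw'⟩
      rw [map_add, h1, h2, add_zero]
    exact Subtype.ext (hnd.1 w this)
  -- complement C₀ of B inside W
  obtain ⟨C₀', hC₀'⟩ := Submodule.exists_isCompl (B.comap W.subtype)
  set C₀ := C₀'.map W.subtype with hC₀def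
  have hC₀W : C₀ ≤ W := Submodule.map_subtype_le W C₀'
  have hBC₀sup : B ⊔ C₀ = W := by
    have h := congrArg (Submodule.map W.subtype) hC₀'.sup_eq_top
    rwa [Submodule.map_sup, Submodule.map_comap_subtype, inf_eq_right.mpr hBW,
      Submodule.map_top, Submodule.range_subtype] at h
  have hBC₀inf : ∀ x, x ∈ C₀ → x ∈ B → x = 0 := by
    intro x hxC hxB
    obtain ⟨y, hyC', rfl⟩ := Submodule.mem_map.1 hxC
    have hy : y ∈ (B.comap W.subtype) ⊓ C₀' := ⟨hxB, hyC'⟩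
    rw [hC₀'.inf_eq_bot] at hy
    simp [(Submodule.mem_bot K).1 hy]
  -- the pairing between B and C₀ is perfect
  set e : B →ₗ[K] Module.Dual K C₀ := ω.compl₁₂ B.subtype C₀.subtype with hedef
  have heapp : ∀ (b : B) (c : C₀), e b c = ω (b : V) (c : V) := fun b c => rfl
  have einj : Function.Injective e := by
    rw [← LinearMap.ker_eq_bot, Submodule.eq_bot_iff]
    rintro b hb
    have hb' : ∀ c : C₀, ω (b : V) (c : V) = 0 := by
      intro c
      have : e b c = 0 := by rw [LinearMap.mem_ker.1 hb]; rfl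
      rwa [heapp] at this
    have hbW : (b : V) ∈ W := hBW b.2
    have : ∀ w : W, (LinearMap.BilinForm.restrict ω W) ⟨(b : V), hbW⟩ w = 0 := by
      rintro ⟨w, hw⟩
      have hw' : w ∈ B ⊔ C₀ := by rw [hBC₀sup]; exact hw
      obtain ⟨b', hb'', c, hc, rfl⟩ := Submodule.mem_sup.1 hw'
      have h1 : ω (b : V) b' = 0 := hBiso _ b.2 _ hb''
      show ω (b : V) (b' + c) = 0
      rw [map_add, h1, hb' ⟨c, hc⟩, add_zero]
    have := hWnd.1 ⟨(b : V), hbW⟩ this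
    exact Subtype.ext (by simpa using congrArg Subtype.val this)
  -- dimension bookkeeping
  have hd1 : finrank K B + finrank K Z = finrank K V := by
    have h1 := LinearMap.finrank_range_add_finrank_ker Q
    rw [← hBdef, ← hZdef] at h1; exact h1
  have hd2 : finrank K B + finrank K H = finrank K Z := by
    have := Submodule.finrank_sup_add_finrank_inf_eq B H
    rw [hHBsup] at this
    have hbot : B ⊓ H = ⊥ := by
      rw [Submodule.eq_bot_iff]; intro x hx; exact hHBinf x hx.2 hx.1
    rw [hbot, finrank_bot, add_zero] at this
    omega
  have hd3 : finrank K H + finrank K W = finrank K V :=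
    Submodule.finrank_add_eq_of_isCompl hHW
  have hd4 : finrank K B + finrank K C₀ = finrank K W := by
    have := Submodule.finrank_sup_add_finrank_inf_eq B C₀
    rw [hBC₀sup] at this
    have hbot : B ⊓ C₀ = ⊥ := by
      rw [Submodule.eq_bot_iff]; intro x hx; exact hBC₀inf x hx.2 hx.1
    rw [hbot, finrank_bot, add_zero] at this
    omega
  have hdim : finrank K B = finrank K (Module.Dual K C₀) := by
    rw [Subspace.dual_finrank_eq]; omega
  have esurj : Function.Surjective e :=
    (LinearMap.injective_iff_surjective_of_finrank_eq_finrank hdim).mp einj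
  set eequiv := LinearEquiv.ofBijective e ⟨einj, esurj⟩ with heeq
  -- the correction map f
  set f : C₀ →ₗ[K] B :=
    eequiv.symm.toLinearMap ∘ₗ ((2:K)⁻¹ • ω.compl₁₂ C₀.subtype C₀.subtype) with hfdef
  have hkey : ∀ c c' : C₀, ω ((f c : V)) (c' : V) = (2:K)⁻¹ * ω (c : V) (c' : V) := by
    intro c c'
    have h1 : e (f c) = ((2:K)⁻¹ • ω.compl₁₂ C₀.subtype C₀.subtype) c := by
      show e (eequiv.symm _) = _
      have := eequiv.apply_symm_apply (((2:K)⁻¹ • ω.compl₁₂ C₀.subtype C₀.subtype) c)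
      exact this
    have := congrArg (fun φ => φ c') h1
    simpa [heapp] using this
  -- C
  set g : C₀ →ₗ[K] V := C₀.subtype - B.subtype ∘ₗ f with hgdef
  set C := LinearMap.range g with hCdef
  have hgapp : ∀ c : C₀, g c = (c : V) - (f c : V) := fun c => rfl
  have hCW : C ≤ W := by
    rintro _ ⟨c, rfl⟩
    rw [hgapp]
    exact sub_mem (hC₀W c.2) (hBW (f c).2)
  have hCiso : ∀ c ∈ C, ∀ c' ∈ C, ω c c' = 0 := by
    rintro _ ⟨c, rfl⟩ _ ⟨c', rfl⟩
    rw [hgapp, hgapp]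
    have h1 : ω ((f c : V)) ((f c' : V)) = 0 := hBiso _ (f c).2 _ (f c').2
    have h2 : ω ((f c : V)) (c' : V) = (2:K)⁻¹ * ω (c : V) (c' : V) := hkey c c'
    have h3 : ω ((f c' : V)) (c : V) = (2:K)⁻¹ * ω (c' : V) (c : V) := hkey c' c
    have h4 : ω (c' : V) (c : V) = - ω (c : V) (c' : V) := (halt.neg_eq _ _).symm
    have h5 : ω (c : V) ((f c') : V) = - ω ((f c') : V) (c : V) := (halt.neg_eq _ _).symm
    have h2' : (2:K)⁻¹ + (2:K)⁻¹ = 1 := by norm_num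
    simp only [map_sub, LinearMap.sub_apply]
    rw [h1, h2, h5, h3, h4]
    linear_combination (ω (c : V) (c' : V)) * h2'
  have hBCdisj : ∀ x, x ∈ B → x ∈ C → x = 0 := by
    intro x hxB hxC
    obtain ⟨c, hc⟩ := hxC
    have hcB : (c : V) ∈ B := by
      have hcx : (c : V) = x + (f c : V) := by rw [← hc, hgapp]; abel
      rw [hcx]; exact Submodule.add_mem B hxB (f c).2
    have hc0 : c = 0 := Subtype.ext (hBC₀inf _ c.2 hcB)
    rw [← hc, hc0, map_zero]
  have hBCsup : B ⊔ C = W := by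
    apply le_antisymm (sup_le hBW hCW)
    intro w hw
    have hw' : w ∈ B ⊔ C₀ := by rw [hBC₀sup]; exact hw
    obtain ⟨b, hb, c, hc, rfl⟩ := Submodule.mem_sup.1 hw'
    have heq : b + c = (b + (f ⟨c, hc⟩ : V)) + g ⟨c, hc⟩ := by rw [hgapp]; abel
    rw [heq]
    exact Submodule.add_mem _ (Submodule.mem_sup_left (Submodule.add_mem B hb (f _).2))
      (Submodule.mem_sup_right ⟨⟨c, hc⟩, rfl⟩)
  -- final assembly
  refine ⟨H, C, ?_, ?_, hHnd, ?_, hBiso, hCiso⟩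
  · apply hodge_isInternal_three
    · rw [hBCsup]; exact hHW.disjoint
    · rw [disjoint_def]
      intro x hxB hxHC
      obtain ⟨h, hh, c, hc, rfl⟩ := Submodule.mem_sup.1 hxHC
      have hhW : h ∈ W := by
        have heq : h = (h + c) - c := by abel
        rw [heq]; exact Submodule.sub_mem W (hBW hxB) (hCW hc)
      have hh0 : h = 0 := Submodule.disjoint_def.1 hHW.disjoint h hh hhW
      have heq : h + c = c := by rw [hh0, zero_add]
      rw [heq] at hxB ⊢
      exact hBCdisj c hxB hc
    · rw [disjoint_def]
      intro x hxC hxHB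
      obtain ⟨h, hh, b, hb, rfl⟩ := Submodule.mem_sup.1 hxHB
      have hhW : h ∈ W := by
        have heq : h = (h + b) - b := by abel
        rw [heq]; exact Submodule.sub_mem W (hCW hxC) (hBW hb)
      have hh0 : h = 0 := Submodule.disjoint_def.1 hHW.disjoint h hh hhW
      have heq : h + b = b := by rw [hh0, zero_add]
      rw [heq] at hxC ⊢
      exact hBCdisj b hb hxC
    · rw [sup_assoc, hBCsup]; exact hHW.sup_eq_top
  · rw [← hHBsup]; exact sup_comm B H
  · rw [hBCsup]; exact hWnd
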